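/- Let (A, d, D) be a commutative BV∞-algebra: A is a ℤ-graded commutative associative algebra, d : A → A is a homogeneous derivation of degree +1 with d² = 0, and D : A → A is an odd linear map with D² = 0 such that every homogeneous component of D − d has negative degree. Write D = d + D_2 + D_3 + ⋯ with D_n homogeneous, and assume (as in the decomposition lemma) that the degree −1 component D_2 is a differential operator of order ≤ 2 on A (F_{D_2}³ ≡ 0). Then the cohomology H(A,d) is a Batalin–Vilkovisky algebra: it inherits a graded commutative associative product from A, the operator D_2 induces a well-defined operator D̄_2 on H(A,d) of degree −1 with D̄_2² = 0, and D̄_2 is a differential operator of order ≤ 2 with respect to the induced product. -/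

import Mathlib

open scoped BigOperators
open DirectSum
set_option synthInstance.maxHeartbeats 1000000
set_option maxHeartbeats 1000000

/-- Sum of the degrees in a list of (element, degree) pairs. -/
def degSum {A : Type*} (l : List (A × ℤ)) : ℤ := (l.map Prod.snd).sum

/-- Akman's multibrackets `F_D^n` on a graded algebra, evaluated on a list of
(homogeneous element, degree) pairs given in *reverse* order:
`FD D dD [(aₙ,iₙ),…,(a₁,i₁)] = F_D^n(a₁,…,aₙ)`, where `dD` is the degree of `D`.
`FD D dD [(a,i)] = D a` and
`F_D^{n+1}(a₁,…,aₙ₊₁) = F_D^n(a₁,…,aₙ·aₙ₊₁) - F_D^n(a₁,…,aₙ)·aₙ₊₁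
  - (-1)^{|aₙ|(|a₁|+⋯+|aₙ₋₁|+|D|)} aₙ·F_D^n(a₁,…,aₙ₋₁,aₙ₊₁)`. -/
def FD {A : Type*} [Ring A] (D : A → A) (dD : ℤ) : List (A × ℤ) → A
  | [] => 0
  | [(a, _)] => D a
  | (b, j) :: (a, i) :: rest =>
      FD D dD ((a * b, i + j) :: rest)
        - FD D dD ((a, i) :: rest) * b
        - (i * (degSum rest + dD)).negOnePow • (a * FD D dD ((b, j) :: rest))
  termination_by l => l.length

/-- Let `(A, d, D)` be a commutative BV∞-algebra: `A` a ℤ-graded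
commutative associative algebra, `D = d + D₂ + D₃ + ⋯` an odd square-zero operator
(encoded by its homogeneous components `Dop n` of degree `3 - 2n`, a locally finite
family with `d = Dop 1`, a derivation of degree `+1` with `d² = 0`), and assume the
degree `-1` component `D₂ = Dop 2` is a differential operator of order `≤ 2` on `A`.
Then the cohomology `H(A,d)` is a Batalin–Vilkovisky algebra: the product descends to
`H(A,d)` (cocycles are closed under multiplication and products with coboundaries are
coboundaries), `D₂` induces a well-defined operator on `H(A,d)` (it preserves cocycles
and coboundaries) which squares to zero there, and the induced operator is a
differential operator of order `≤ 2` for the induced product (its third bracket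
vanishes on cohomology classes, i.e. is a coboundary on homogeneous cocycles). -/
lemma comp_zero {A : Type*} [Ring A] [Algebra ℚ A] (𝒜 : ℤ → Submodule ℚ A)
    (hint : DirectSum.IsInternal 𝒜) {ι : Type*} (s : Finset ι) (deg : ι → ℤ)
    (hinj : Set.InjOn deg s) (x : ι → A) (hx : ∀ p ∈ s, x p ∈ 𝒜 (deg p))
    (hsum : ∑ p ∈ s, x p = 0) : ∀ p ∈ s, x p = 0 := by
  classical
  haveI := hint.chooseDecomposition
  intro p hp
  have h := congrArg (fun y => ((DirectSum.decompose 𝒜 y) (deg p) : A)) hsum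
  simp only [DirectSum.decompose_sum, DirectSum.decompose_zero] at h
  rw [DFinsupp.finset_sum_apply] at h
  push_cast at h
  rw [Finset.sum_eq_single p] at h
  · rw [DirectSum.decompose_of_mem_same 𝒜 (hx p hp)] at h
    simpa using h
  · intro q hq hqp
    rw [DirectSum.decompose_of_mem_ne 𝒜 (hx q hq) (fun e => hqp (hinj hq hp e))]
  · intro h'; exact absurd hp h'

lemma linext {A : Type*} [Ring A] [Algebra ℚ A] (𝒜 : ℤ → Submodule ℚ A)
    (hint : DirectSum.IsInternal 𝒜) (p : A → Prop) (h0 : p 0)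
    (hadd : ∀ x y, p x → p y → p (x + y)) (hhom : ∀ (i : ℤ) (a : A), a ∈ 𝒜 i → p a) :
    ∀ a, p a := by
  intro a
  have ha : a ∈ ⨆ i, 𝒜 i := by rw [hint.submodule_iSup_eq_top]; trivial
  exact Submodule.iSup_induction (motive := p) 𝒜 ha hhom h0 hadd

lemma ker_sup {A : Type*} [Ring A] [Algebra ℚ A] (𝒜 : ℤ → Submodule ℚ A)
    (hint : DirectSum.IsInternal 𝒜) (d : A →ₗ[ℚ] A)
    (hd : ∀ {i : ℤ} {a : A}, a ∈ 𝒜 i → d a ∈ 𝒜 (i + 1)) {a : A} (ha : d a = 0) :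
    a ∈ ⨆ i, (𝒜 i ⊓ LinearMap.ker d) := by
  classical
  haveI := hint.chooseDecomposition
  have hrep := DirectSum.sum_support_decompose 𝒜 a
  have hker : ∀ i ∈ (DirectSum.decompose 𝒜 a).support,
      d ((DirectSum.decompose 𝒜 a i : A)) = 0 := by
    apply comp_zero 𝒜 hint _ (fun i => i + 1)
      (fun i _ j _ h => by simpa using h) _
      (fun i _ => hd (SetLike.coe_mem _))
    rw [← map_sum, hrep, ha]
  rw [← hrep]
  exact Submodule.sum_mem _ fun i hi => Submodule.mem_iSup_of_mem i
    ⟨SetLike.coe_mem _, hker i hi⟩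


lemma square_rel {A : Type*} [Ring A] [Algebra ℚ A] (𝒜 : ℤ → Submodule ℚ A)
    (hint : DirectSum.IsInternal 𝒜)
    (Dop : ℕ → (A →ₗ[ℚ] A)) (hD0 : Dop 0 = 0)
    (hdeg : ∀ n : ℕ, 1 ≤ n → ∀ {i : ℤ} {a : A}, a ∈ 𝒜 i →
      Dop n a ∈ 𝒜 (i + (3 - 2 * (n : ℤ))))
    (hfin : ∀ a : A, (Function.support fun n => Dop n a).Finite)
    (hDsq : ∀ a : A, (∑ᶠ n : ℕ, Dop n (∑ᶠ m : ℕ, Dop m a)) = 0) :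
    (∀ a, Dop 1 (Dop 2 a) + Dop 2 (Dop 1 a) = 0) ∧
    (∀ a, Dop 1 (Dop 3 a) + Dop 2 (Dop 2 a) + Dop 3 (Dop 1 a) = 0) := by
  classical
  have key : ∀ (i : ℤ) (a : A), a ∈ 𝒜 i → ∀ k : ℕ, k ≤ 4 →
      ∑ j ∈ Finset.range (k + 1), Dop j (Dop (k - j) a) = 0 := by
    intro i a hai k hk4
    set b := ∑ᶠ m : ℕ, Dop m a with hbdef
    set T := (hfin a).toFinset with hTdef
    set S := (hfin b).toFinset with hSdef
    set N := ((S ∪ T).sup id) + 4 with hNdef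
    set R := Finset.range (N + 1) with hRdef
    have hSR : S ⊆ R := by
      intro n hn
      have : n ≤ (S ∪ T).sup id := Finset.le_sup (f := id) (Finset.mem_union_left _ hn)
      simp only [hRdef, Finset.mem_range]; omega
    have hTR : T ⊆ R := by
      intro n hn
      have : n ≤ (S ∪ T).sup id := Finset.le_sup (f := id) (Finset.mem_union_right _ hn)
      simp only [hRdef, Finset.mem_range]; omega
    have hb : b = ∑ m ∈ R, Dop m a := by
      rw [hbdef, finsum_eq_sum _ (hfin a)]
      exact Finset.sum_subset hTR (by
        intro x _ hx
        by_contra h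
        exact hx ((hfin a).mem_toFinset.2 h))
    have h0 : ∑ n ∈ R, Dop n b = 0 := by
      rw [← Finset.sum_subset hSR (by
        intro x _ hx
        by_contra h
        exact hx ((hfin b).mem_toFinset.2 h))]
      rw [← finsum_eq_sum _ (hfin b)]
      exact hDsq a
    have hsq : ∑ p ∈ R ×ˢ R, Dop p.1 (Dop p.2 a) = 0 := by
      rw [Finset.sum_product' (f := fun n m => Dop n (Dop m a))]
      calc ∑ n ∈ R, ∑ m ∈ R, Dop n (Dop m a)
          = ∑ n ∈ R, Dop n b := by
            refine Finset.sum_congr rfl fun n _ => ?_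
            rw [hb, map_sum]
        _ = 0 := h0
    have hmaps : ∀ p ∈ R ×ˢ R, p.1 + p.2 ∈ Finset.range (2 * N + 1) := by
      intro p hp
      simp only [Finset.mem_product, hRdef, Finset.mem_range] at hp ⊢
      omega
    have hfib : ∑ k ∈ Finset.range (2 * N + 1),
        ∑ p ∈ (R ×ˢ R).filter (fun p => p.1 + p.2 = k), Dop p.1 (Dop p.2 a) = 0 := by
      rw [Finset.sum_fiberwise_of_maps_to hmaps]
      exact hsq
    have hinj : Set.InjOn (fun k : ℕ => i + 6 - 2 * (k : ℤ))
        (Finset.range (2 * N + 1)) := by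
      intro x _ y _ h
      simp only at h
      omega
    have hmem : ∀ k ∈ Finset.range (2 * N + 1),
        (∑ p ∈ (R ×ˢ R).filter (fun p => p.1 + p.2 = k), Dop p.1 (Dop p.2 a))
          ∈ 𝒜 (i + 6 - 2 * (k : ℤ)) := by
      intro k _
      apply Submodule.sum_mem
      intro p hp
      simp only [Finset.mem_filter, Finset.mem_product] at hp
      obtain ⟨⟨hp1, hp2⟩, hpk⟩ := hp
      rcases Nat.eq_zero_or_pos p.1 with h1 | h1
      · rw [h1, hD0]; simp
      rcases Nat.eq_zero_or_pos p.2 with h2 | h2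
      · rw [h2, hD0]; simp
      have hm := hdeg p.1 h1 (hdeg p.2 h2 hai)
      have he : i + (3 - 2 * (p.2 : ℤ)) + (3 - 2 * (p.1 : ℤ)) = i + 6 - 2 * (k : ℤ) := by
        have : (p.1 : ℤ) + (p.2 : ℤ) = (k : ℤ) := by exact_mod_cast hpk
        omega
      rwa [he] at hm
    have hzero := comp_zero 𝒜 hint (Finset.range (2 * N + 1))
      (fun k : ℕ => i + 6 - 2 * (k : ℤ)) hinj
      (fun k => ∑ p ∈ (R ×ˢ R).filter (fun p => p.1 + p.2 = k), Dop p.1 (Dop p.2 a))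
      hmem hfib
    have hkN : k ≤ N := by omega
    have hkr : k ∈ Finset.range (2 * N + 1) := by simp only [Finset.mem_range]; omega
    have himg : (R ×ˢ R).filter (fun p => p.1 + p.2 = k)
        = (Finset.range (k + 1)).image (fun j => (j, k - j)) := by
      ext ⟨n, m⟩
      simp only [Finset.mem_filter, Finset.mem_product, Finset.mem_image, Finset.mem_range,
        hRdef, Prod.mk.injEq]
      constructor
      · rintro ⟨⟨_, _⟩, h⟩
        exact ⟨n, by omega, rfl, by omega⟩
      · rintro ⟨j, hj, rfl, rfl⟩
        omega
    have hz := hzero k hkr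
    simp only [himg] at hz
    rw [Finset.sum_image (by
      rintro x _ y _ h
      simpa using congrArg Prod.fst h)] at hz
    exact hz
  constructor
  · refine linext 𝒜 hint (fun a => Dop 1 (Dop 2 a) + Dop 2 (Dop 1 a) = 0) (by simp) ?_ ?_
    · intro x y hx hy
      simp only [map_add]
      calc Dop 1 (Dop 2 x) + Dop 1 (Dop 2 y) + (Dop 2 (Dop 1 x) + Dop 2 (Dop 1 y))
          = (Dop 1 (Dop 2 x) + Dop 2 (Dop 1 x)) + (Dop 1 (Dop 2 y) + Dop 2 (Dop 1 y)) := by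
            abel
        _ = 0 := by rw [hx, hy, add_zero]
    · intro i a ha
      have := key i a ha 3 (by norm_num)
      simpa [Finset.sum_range_succ, hD0] using this
  · refine linext 𝒜 hint
      (fun a => Dop 1 (Dop 3 a) + Dop 2 (Dop 2 a) + Dop 3 (Dop 1 a) = 0) (by simp) ?_ ?_
    · intro x y hx hy
      simp only [map_add]
      calc Dop 1 (Dop 3 x) + Dop 1 (Dop 3 y) + (Dop 2 (Dop 2 x) + Dop 2 (Dop 2 y))
            + (Dop 3 (Dop 1 x) + Dop 3 (Dop 1 y))
          = (Dop 1 (Dop 3 x) + Dop 2 (Dop 2 x) + Dop 3 (Dop 1 x))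
            + (Dop 1 (Dop 3 y) + Dop 2 (Dop 2 y) + Dop 3 (Dop 1 y)) := by abel
        _ = 0 := by rw [hx, hy, add_zero]
    · intro i a ha
      have := key i a ha 4 (by norm_num)
      simpa [Finset.sum_range_succ, hD0] using this

theorem stmt11 {A : Type*} [Ring A] [Algebra ℚ A] (𝒜 : ℤ → Submodule ℚ A)
    (hinternal : DirectSum.IsInternal 𝒜)
    (hmul : ∀ {i j : ℤ} {a b : A}, a ∈ 𝒜 i → b ∈ 𝒜 j → a * b ∈ 𝒜 (i + j))
    (hcomm : ∀ {i j : ℤ} (a b : A), a ∈ 𝒜 i → b ∈ 𝒜 j →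
      a * b = (i * j).negOnePow • (b * a))
    (Dop : ℕ → (A →ₗ[ℚ] A)) (hD0 : Dop 0 = 0)
    (hdeg : ∀ n : ℕ, 1 ≤ n → ∀ {i : ℤ} {a : A}, a ∈ 𝒜 i →
      Dop n a ∈ 𝒜 (i + (3 - 2 * (n : ℤ))))
    (hfin : ∀ a : A, (Function.support fun n => Dop n a).Finite)
    (hder : ∀ {i : ℤ} (a b : A), a ∈ 𝒜 i →
      Dop 1 (a * b) = Dop 1 a * b + i.negOnePow • (a * Dop 1 b))
    (hdsq : ∀ a : A, Dop 1 (Dop 1 a) = 0)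
    (hDsq : ∀ a : A, (∑ᶠ n : ℕ, Dop n (∑ᶠ m : ℕ, Dop m a)) = 0)
    (horder2 : ∀ {i j k : ℤ} (a b c : A), a ∈ 𝒜 i → b ∈ 𝒜 j → c ∈ 𝒜 k →
      FD (⇑(Dop 2)) (-1) [(c, k), (b, j), (a, i)] = 0) :
    (∀ a b : A, Dop 1 a = 0 → Dop 1 b = 0 → Dop 1 (a * b) = 0) ∧
    (∀ a x : A, Dop 1 a = 0 → ∃ y, a * Dop 1 x = Dop 1 y) ∧
    (∀ x b : A, Dop 1 b = 0 → ∃ y, Dop 1 x * b = Dop 1 y) ∧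
    (∀ a : A, Dop 1 a = 0 → Dop 1 (Dop 2 a) = 0) ∧
    (∀ x : A, ∃ y, Dop 2 (Dop 1 x) = Dop 1 y) ∧
    (∀ a : A, Dop 1 a = 0 → ∃ y, Dop 2 (Dop 2 a) = Dop 1 y) ∧
    (∀ {i j k : ℤ} (a b c : A), a ∈ 𝒜 i → b ∈ 𝒜 j → c ∈ 𝒜 k →
      Dop 1 a = 0 → Dop 1 b = 0 → Dop 1 c = 0 →
      ∃ y, FD (⇑(Dop 2)) (-1) [(c, k), (b, j), (a, i)] = Dop 1 y) := by
  obtain ⟨rel3, rel4⟩ := square_rel 𝒜 hinternal Dop hD0 hdeg hfin hDsq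
  have hd1 : ∀ {i : ℤ} {a : A}, a ∈ 𝒜 i → Dop 1 a ∈ 𝒜 (i + 1) := by
    intro i a h
    simpa using hdeg 1 le_rfl h
  have hsm : ∀ (u : ℤˣ) (z : A), Dop 1 (u • z) = u • Dop 1 z := by
    intro u z
    rw [Units.smul_def, Units.smul_def, map_zsmul]
  have mulker : ∀ (b : A), Dop 1 b = 0 → ∀ x, Dop 1 (x * b) = Dop 1 x * b := by
    intro b hb
    refine linext 𝒜 hinternal (fun x => Dop 1 (x * b) = Dop 1 x * b) (by simp) ?_ ?_
    · intro x y hx hy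
      rw [add_mul, map_add, hx, hy, map_add, add_mul]
    · intro i a ha
      rw [hder a b ha, hb]
      simp
  refine ⟨?_, ?_, ?_, ?_, ?_, ?_, ?_⟩
  · intro a b ha hb
    rw [mulker b hb a, ha, zero_mul]
  · intro a x ha
    have hmem := ker_sup 𝒜 hinternal (Dop 1) (fun h => hd1 h) ha
    refine Submodule.iSup_induction
      (motive := fun a => ∃ y, a * Dop 1 x = Dop 1 y) _ hmem ?_ ⟨0, by simp⟩ ?_
    · intro i c hc
      obtain ⟨hci, hck⟩ := hc
      refine ⟨i.negOnePow • (c * x), ?_⟩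
      have h := hder c x hci
      rw [LinearMap.mem_ker.1 hck, zero_mul, zero_add] at h
      rw [hsm]
      calc c * Dop 1 x = i.negOnePow • (i.negOnePow • (c * Dop 1 x)) := by
            rw [smul_smul, Int.units_mul_self, one_smul]
        _ = i.negOnePow • Dop 1 (c * x) := by rw [← h]
    · rintro x' y' ⟨y1, h1⟩ ⟨y2, h2⟩
      exact ⟨y1 + y2, by rw [add_mul, h1, h2, map_add]⟩
  · intro x b hb
    exact ⟨x * b, (mulker b hb x).symm⟩
  · intro a ha
    have h := rel3 a
    rwa [ha, map_zero, add_zero] at h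
  · intro x
    refine ⟨-(Dop 2 x), ?_⟩
    have h := rel3 x
    rw [map_neg]
    exact eq_neg_of_add_eq_zero_right h
  · intro a ha
    refine ⟨-(Dop 3 a), ?_⟩
    have h := rel4 a
    rw [ha, map_zero, add_zero] at h
    rw [map_neg]
    exact eq_neg_of_add_eq_zero_right h
  · intro i j k a b c hai hbj hck _ _ _
    exact ⟨0, by rw [horder2 a b c hai hbj hck, map_zero]⟩
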